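/- The tails $t_n = \mathop{K}_{i=n+1}^{N}(c_i/b_i)$ of a finite continued fraction satisfy the backward recursion $t_n = c_{n+1}/(b_{n+1} + t_{n+1})$ (with $t_N = 0$), and the Schur complements $\Sigma_i$ of the associated CF-matrix $T_N(A)$ satisfy $\Sigma_i = b_i(A) + t_i(A)$ as rational matrix functions of $A$, provided all the matrices $b_{i+1}(A) + t_{i+1}(A)$ are invertible; in particular $\Sigma_0 = g_N(A)$, where $g_N(z) = b_0(z) + t_0(z)$ is the $N$-th approximant. -/
import Mathlib

lemma commute_nonsing_inv {m : ℕ} {X Y : Matrix (Fin m) (Fin m) ℂ}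
    (h : IsUnit X.det) (hc : X * Y = Y * X) : X⁻¹ * Y = Y * X⁻¹ := by
  calc X⁻¹ * Y = X⁻¹ * Y * (X * X⁻¹) := by rw [Matrix.mul_nonsing_inv X h, mul_one]
    _ = X⁻¹ * (Y * X) * X⁻¹ := by simp only [mul_assoc]
    _ = X⁻¹ * (X * Y) * X⁻¹ := by rw [hc]
    _ = X⁻¹ * X * Y * X⁻¹ := by simp only [mul_assoc]
    _ = Y * X⁻¹ := by rw [Matrix.nonsing_inv_mul X h, one_mul]

/-- The Schur complements of a CF-matrix built from a finite continued fraction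
with polynomial coefficients (evaluated at `A`) coincide with
`b_i(A) + t_i(A)`, where the tails `t_i` satisfy the backward recursion
`t_i = c_{i+1}(A) (b_{i+1}(A) + t_{i+1}(A))⁻¹`, `t_N = 0`; in particular
`S_0 = g_N(A) = b_0(A) + t_0(A)`. -/
theorem schur_complements_eq_cf_tails
    (m N : ℕ) (A : Matrix (Fin m) (Fin m) ℂ)
    (pb pc pa pg : ℕ → Polynomial ℂ)
    (hαγ : ∀ i, 1 ≤ i → i ≤ N →
      Polynomial.aeval A (pa i) * Polynomial.aeval A (pg i)
        = -(Polynomial.aeval A (pc i)))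
    (t Sg : ℕ → Matrix (Fin m) (Fin m) ℂ)
    (htN : t N = 0)
    (ht : ∀ i, i < N → t i =
      Polynomial.aeval A (pc (i + 1)) *
        (Polynomial.aeval A (pb (i + 1)) + t (i + 1))⁻¹)
    (hinv : ∀ i, i < N → IsUnit (Polynomial.aeval A (pb (i + 1)) + t (i + 1)).det)
    (hSN : Sg N = Polynomial.aeval A (pb N))
    (hS : ∀ i, i < N → Sg i =
      Polynomial.aeval A (pb i) -
        Polynomial.aeval A (pg (i + 1)) * (Sg (i + 1))⁻¹ *
          Polynomial.aeval A (pa (i + 1))) :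
    (∀ i, i ≤ N → Sg i = Polynomial.aeval A (pb i) + t i) ∧
    Sg 0 = Polynomial.aeval A (pb 0) + t 0 := by
  -- key : for each k, for i = N - k, commutation of t i with all aeval A q, and Sg i = b i + t i
  have key : ∀ k, ∀ i, i + k = N →
      (∀ q : Polynomial ℂ, Polynomial.aeval A q * t i = t i * Polynomial.aeval A q) ∧
      Sg i = Polynomial.aeval A (pb i) + t i := by
    intro k
    induction k with
    | zero =>
      intro i hi
      simp only [Nat.add_zero] at hi
      subst hi
      refine ⟨fun q => by simp [htN], by simp [htN, hSN]⟩
    | succ k ih =>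
      intro i hi
      have hiN : i < N := by omega
      obtain ⟨hcomm, hSeq⟩ := ih (i + 1) (by omega)
      set S := Polynomial.aeval A (pb (i + 1)) + t (i + 1) with hSdef
      have hdet : IsUnit S.det := hinv i hiN
      -- S commutes with every aeval A q
      have hScomm : ∀ q : Polynomial ℂ, Polynomial.aeval A q * S = S * Polynomial.aeval A q := by
        intro q
        simp only [hSdef, mul_add, add_mul, hcomm q]
        congr 1
        rw [← map_mul, ← map_mul, mul_comm]
      have hSinv : ∀ q : Polynomial ℂ, Polynomial.aeval A q * S⁻¹ = S⁻¹ * Polynomial.aeval A q := by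
        intro q
        exact (commute_nonsing_inv hdet (hScomm q).symm).symm
      have hti : t i = Polynomial.aeval A (pc (i + 1)) * S⁻¹ := ht i hiN
      have htcomm : ∀ q : Polynomial ℂ, Polynomial.aeval A q * t i = t i * Polynomial.aeval A q := by
        intro q
        rw [hti, ← mul_assoc, ← map_mul, mul_comm q, map_mul, mul_assoc, hSinv q, ← mul_assoc]
      refine ⟨htcomm, ?_⟩
      rw [hS i hiN, hSeq]
      have hga : Polynomial.aeval A (pg (i + 1)) * S⁻¹ * Polynomial.aeval A (pa (i + 1))
          = -(t i) := by
        rw [mul_assoc, ← hSinv (pa (i+1)), ← mul_assoc, ← map_mul, mul_comm (pg (i+1)),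
          map_mul, hαγ (i + 1) (by omega) (by omega), neg_mul, ← hti]
      rw [hga, sub_neg_eq_add]
  have main : ∀ i, i ≤ N → Sg i = Polynomial.aeval A (pb i) + t i := by
    intro i hi
    exact (key (N - i) i (by omega)).2
  exact ⟨main, main 0 (Nat.zero_le N)⟩
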